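/- Let S = ℚ[λ₁,…,λₙ] with its 𝔖ₙ-action, e_triv and e_sign the trivial and sign idempotents in ℚ[𝔖ₙ] ⊆ S ⋊ 𝔖ₙ. Then the functor M ↦ Hom_{S⋊𝔖ₙ}(P_sign, P_triv ⊗_{S^{𝔖ₙ}} M) from S^{𝔖ₙ}-modules to End(P_sign)-modules, where P_triv = (S⋊𝔖ₙ)e_triv and P_sign = (S⋊𝔖ₙ)e_sign, is naturally isomorphic to the functor M ↦ M ⊗_ℚ ε, where ε is the one-dimensional sign representation; in particular applied to M = S^{𝔖ₙ} it produces the space of skew-symmetric elements (S ⊗ ε)^{𝔖ₙ}. -/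

import Mathlib

set_option synthInstance.maxHeartbeats 1000000
set_option maxHeartbeats 1000000


open MvPolynomial Equiv TensorProduct

noncomputable section

/-- The Vandermonde determinant `Δ = ∏_{i<j}(λⱼ - λᵢ)`. -/
def vandermonde (n : ℕ) : MvPolynomial (Fin n) ℚ :=
  ∏ p ∈ Finset.univ.filter (fun p : Fin n × Fin n => p.1 < p.2), (X p.2 - X p.1)

/-- The action of `σ ∈ 𝔖ₙ` on `S = ℚ[λ₁,…,λₙ]`, as a linear map over the invariant
subring `S^{𝔖ₙ}`. -/
def renameLin (n : ℕ) (σ : Perm (Fin n)) :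
    MvPolynomial (Fin n) ℚ →ₗ[symmetricSubalgebra (Fin n) ℚ] MvPolynomial (Fin n) ℚ where
  toFun := rename ⇑σ
  map_add' := map_add _
  map_smul' := by
    intro r f
    simp only [RingHom.id_apply, Algebra.smul_def]
    rw [map_mul]
    congr 1
    exact r.2 σ

/-- The functor `M ↦ Hom_{S⋊𝔖ₙ}(P_sign, P_triv ⊗_{S^{𝔖ₙ}} M)`, computed as the
sign-isotypic part of `S ⊗_{S^{𝔖ₙ}} M`, is naturally isomorphic to `M ⊗ ε`: concretely,
`m ↦ Δ ⊗ m` is a natural injection of `M` onto the sign-isotypic part; applied to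
`M = S^{𝔖ₙ}` it produces exactly the skew-symmetric polynomials. -/
lemma vandermonde_eq_det (n : ℕ) :
    vandermonde n = (Matrix.vandermonde (fun i : Fin n => (X i : MvPolynomial (Fin n) ℚ))).det := by
  rw [Matrix.det_vandermonde, vandermonde, Finset.prod_sigma']
  refine Finset.prod_bij' (fun p _ => ⟨p.1, p.2⟩) (fun x _ => (x.1, x.2)) ?_ ?_ ?_ ?_ ?_ <;>
    simp [Finset.mem_Ioi]

lemma rename_vandermonde (n : ℕ) (σ : Perm (Fin n)) :
    rename ⇑σ (vandermonde n) = (Perm.sign σ : ℤ) • vandermonde n := by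
  rw [vandermonde_eq_det, AlgHom.map_det, AlgHom.mapMatrix_apply]
  have : (Matrix.vandermonde (fun i : Fin n => (X i : MvPolynomial (Fin n) ℚ))).map
      ⇑(rename ⇑σ)
      = ((Matrix.vandermonde (fun i : Fin n => (X i : MvPolynomial (Fin n) ℚ))).submatrix σ id) := by
    ext i j
    simp [Matrix.vandermonde]
  rw [this, Matrix.det_permute]
  simp [zsmul_eq_mul]

abbrev Spoly (n : ℕ) := MvPolynomial (Fin n) ℚ

/-- substitution X i := X j -/
def subst (n : ℕ) (i j : Fin n) : Spoly n →ₐ[ℚ] Spoly n :=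
  aeval (fun k => if k = i then X j else X k)

lemma subst_dvd (n : ℕ) (i j : Fin n) (f : Spoly n) :
    (X i - X j) ∣ f - subst n i j f := by
  induction f using MvPolynomial.induction_on with
  | C a => simp [subst]
  | add p q hp hq =>
      have : p + q - subst n i j (p + q) = (p - subst n i j p) + (q - subst n i j q) := by
        rw [map_add]; ring
      rw [this]; exact dvd_add hp hq
  | mul_X p s hp =>
      have : p * X s - subst n i j (p * X s)
          = (p - subst n i j p) * X s + subst n i j p * (X s - subst n i j (X s)) := by
        rw [map_mul]; ring
      rw [this]
      refine dvd_add (Dvd.dvd.mul_right hp _) (Dvd.dvd.mul_left ?_ _)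
      by_cases h : s = i
      · subst h; simp [subst]
      · simp [subst, h]

lemma subst_eq_zero_of_skew (n : ℕ) (i j : Fin n) (hij : i ≠ j) (f : Spoly n)
    (hf : rename ⇑(swap i j) f = -f) : subst n i j f = 0 := by
  have hcomp : (subst n i j).comp (rename (swap i j) : Spoly n →ₐ[ℚ] Spoly n) = subst n i j := by
    apply MvPolynomial.algHom_ext
    intro k
    simp only [AlgHom.comp_apply, rename_X, subst, aeval_X]
    rcases eq_or_ne k i with rfl | hki
    · simp [swap_apply_left, hij.symm, if_neg hij.symm]
    · rcases eq_or_ne k j with rfl | hkj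
      · simp [swap_apply_right]
      · simp [swap_apply_of_ne_of_ne hki hkj, hki]
  have h1 := DFunLike.congr_fun hcomp f
  rw [AlgHom.comp_apply, hf, map_neg] at h1
  have h2 : (2:ℚ) • subst n i j f = 0 := by
    rw [two_smul]; linear_combination -h1
  rcases smul_eq_zero.mp h2 with h | h
  · exact absurd h two_ne_zero
  · exact h

lemma X_sub_X_ne_zero (n : ℕ) {i j : Fin n} (hij : i ≠ j) :
    (X i - X j : Spoly n) ≠ 0 :=
  sub_ne_zero.mpr (fun h => hij (X_injective h))

lemma prime_X_sub_X (n : ℕ) {i j : Fin n} (hij : i ≠ j) :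
    Prime (X i - X j : Spoly n) := by
  have hker : RingHom.ker (subst n i j).toRingHom = Ideal.span {(X i - X j : Spoly n)} := by
    apply le_antisymm
    · intro f hf
      rw [RingHom.mem_ker] at hf
      rw [Ideal.mem_span_singleton]
      replace hf : subst n i j f = 0 := hf
      have := subst_dvd n i j f
      rwa [hf, sub_zero] at this
    · rw [Ideal.span_le, Set.singleton_subset_iff]
      simp only [SetLike.mem_coe, RingHom.mem_ker]
      show subst n i j (X i - X j) = 0
      simp [subst]
  have hp : (Ideal.span {(X i - X j : Spoly n)}).IsPrime := by
    rw [← hker]; exact RingHom.ker_isPrime _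
  exact (Ideal.span_singleton_prime (X_sub_X_ne_zero n hij)).mp hp

lemma not_dvd_X_sub_X (n : ℕ) {p q : Fin n × Fin n} (hp : p.1 < p.2) (hq : q.1 < q.2)
    (hpq : p ≠ q) : ¬ ((X p.2 - X p.1 : Spoly n) ∣ (X q.2 - X q.1)) := by
  -- find x in {q.1, q.2} not in {p.1, p.2}
  have hx : ∃ x : Fin n, (x = q.1 ∨ x = q.2) ∧ x ≠ p.1 ∧ x ≠ p.2 := by
    by_cases h1 : q.1 ≠ p.1 ∧ q.1 ≠ p.2
    · exact ⟨q.1, Or.inl rfl, h1⟩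
    · by_cases h2 : q.2 ≠ p.1 ∧ q.2 ≠ p.2
      · exact ⟨q.2, Or.inr rfl, h2⟩
      · exfalso
        rw [not_and_or, not_ne_iff, not_ne_iff] at h1 h2
        apply hpq
        have : q.1 = p.1 ∧ q.2 = p.2 := by
          rcases h1 with h1 | h1 <;> rcases h2 with h2 | h2
          · rw [h1, h2] at hq; exact absurd hq (lt_irrefl _)
          · exact ⟨h1, h2⟩
          · rw [h1, h2] at hq; exact absurd (hp.trans hq) (lt_irrefl _)
          · rw [h1, h2] at hq; exact absurd hq (lt_irrefl _)
        exact Prod.ext this.1.symm this.2.symm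
  obtain ⟨x, hxq, hxp1, hxp2⟩ := hx
  intro hdvd
  set v : Fin n → ℚ := fun k => if k = x then 1 else 0 with hv
  have hdvd' : eval v (X p.2 - X p.1) ∣ eval v (X q.2 - X q.1) := map_dvd _ hdvd
  have h0 : eval v (X p.2 - X p.1 : Spoly n) = 0 := by
    simp [hv, show p.2 ≠ x from fun h => hxp2 h.symm, show p.1 ≠ x from fun h => hxp1 h.symm]
  rw [h0, zero_dvd_iff] at hdvd'
  have hq12 : q.1 ≠ q.2 := ne_of_lt hq
  rcases hxq with rfl | rfl
  · simp [hv, hq12, Ne.symm hq12] at hdvd'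
  · simp [hv, hq12, Ne.symm hq12] at hdvd'

lemma prod_primes_dvd' {α : Type*} [CommRing α] [IsDomain α] {ι : Type*} [DecidableEq ι]
    (P : Finset ι) (d : ι → α) (hprime : ∀ p ∈ P, Prime (d p))
    (hnd : ∀ p ∈ P, ∀ q ∈ P, p ≠ q → ¬ d p ∣ d q) :
    ∀ g : α, (∀ p ∈ P, d p ∣ g) → (∏ p ∈ P, d p) ∣ g := by
  induction P using Finset.induction_on with
  | empty => intro g _; simp
  | @insert a P ha ih =>
      intro g hg
      obtain ⟨h, rfl⟩ := hg a (Finset.mem_insert_self a P)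
      rw [Finset.prod_insert ha]
      refine mul_dvd_mul_left _ (ih (fun p hp => hprime p (Finset.mem_insert_of_mem hp))
        (fun p hp q hq hpq => hnd p (Finset.mem_insert_of_mem hp) q (Finset.mem_insert_of_mem hq) hpq)
        h (fun p hp => ?_))
      have hpa : p ≠ a := fun h' => ha (h' ▸ hp)
      have := hg p (Finset.mem_insert_of_mem hp)
      exact ((hprime p (Finset.mem_insert_of_mem hp)).2.2 _ _ this).resolve_left
        (hnd p (Finset.mem_insert_of_mem hp) a (Finset.mem_insert_self a P) hpa)

lemma vandermonde_ne_zero (n : ℕ) : vandermonde n ≠ 0 := by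
  rw [vandermonde]
  rw [Finset.prod_ne_zero_iff]
  intro p hp
  rw [Finset.mem_filter] at hp
  exact X_sub_X_ne_zero n (ne_of_lt hp.2).symm

lemma skew_exists (n : ℕ) (f : Spoly n)
    (hf : ∀ σ : Perm (Fin n), rename ⇑σ f = (Perm.sign σ : ℤ) • f) :
    ∃ g : Spoly n, g.IsSymmetric ∧ f = vandermonde n * g := by
  have hdvd : vandermonde n ∣ f := by
    rw [vandermonde]
    refine prod_primes_dvd' _ _ ?_ ?_ f ?_
    · intro p hp
      rw [Finset.mem_filter] at hp
      exact prime_X_sub_X n (ne_of_lt hp.2).symm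
    · intro p hp q hq hpq
      rw [Finset.mem_filter] at hp hq
      exact not_dvd_X_sub_X n hp.2 hq.2 hpq
    · intro p hp
      rw [Finset.mem_filter] at hp
      have hij : p.2 ≠ p.1 := (ne_of_lt hp.2).symm
      have hswap : rename ⇑(swap p.2 p.1) f = -f := by
        rw [hf, Perm.sign_swap hij]; simp
      have h0 := subst_eq_zero_of_skew n p.2 p.1 hij f hswap
      have := subst_dvd n p.2 p.1 f
      rwa [h0, sub_zero] at this
  obtain ⟨g, rfl⟩ := hdvd
  refine ⟨g, fun σ => ?_, rfl⟩
  have h := hf σ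
  rw [map_mul, rename_vandermonde, zsmul_eq_mul, zsmul_eq_mul, mul_assoc] at h
  have hc : ((Perm.sign σ : ℤ) : Spoly n) ≠ 0 := by
    rcases Int.units_eq_one_or (Perm.sign σ) with h' | h' <;> rw [h'] <;> norm_num
  exact mul_left_cancel₀ (vandermonde_ne_zero n) (mul_left_cancel₀ hc h)

def asym (n : ℕ) (f : Spoly n) : Spoly n :=
  ∑ σ : Perm (Fin n), (Perm.sign σ : ℤ) • rename ⇑σ f

lemma asym_skew (n : ℕ) (f : Spoly n) (τ : Perm (Fin n)) :
    rename ⇑τ (asym n f) = (Perm.sign τ : ℤ) • asym n f := by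
  rw [asym, map_sum, Finset.smul_sum]
  refine Fintype.sum_equiv (Equiv.mulLeft τ) _ _ fun σ => ?_
  rw [map_zsmul, rename_rename]
  have h1 : (⇑τ ∘ ⇑σ) = ⇑(τ * σ) := rfl
  rw [h1, smul_smul, Equiv.coe_mulLeft]
  congr 1
  rcases Int.units_eq_one_or (Perm.sign τ) with h | h <;>
    simp [Perm.sign_mul, h]

lemma vandermonde_mul_right_cancel (n : ℕ) {a b : Spoly n}
    (h : vandermonde n * a = vandermonde n * b) : a = b :=
  mul_left_cancel₀ (vandermonde_ne_zero n) h

def gsym (n : ℕ) (f : Spoly n) : Spoly n :=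
  Classical.choose (skew_exists n (asym n f) (asym_skew n f))

lemma gsym_symm (n : ℕ) (f : Spoly n) : (gsym n f).IsSymmetric :=
  (Classical.choose_spec (skew_exists n (asym n f) (asym_skew n f))).1

lemma gsym_spec (n : ℕ) (f : Spoly n) : asym n f = vandermonde n * gsym n f :=
  (Classical.choose_spec (skew_exists n (asym n f) (asym_skew n f))).2

lemma gsym_unique (n : ℕ) (f g : Spoly n) (h : asym n f = vandermonde n * g) :
    gsym n f = g :=
  vandermonde_mul_right_cancel n ((gsym_spec n f).symm.trans h)

/-- The projection `π₀ : S →ₗ[R] R`, `f ↦ (antisymmetrization of f)/Δ`. -/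
def piR (n : ℕ) : Spoly n →ₗ[symmetricSubalgebra (Fin n) ℚ] symmetricSubalgebra (Fin n) ℚ where
  toFun f := ⟨gsym n f, (mem_symmetricSubalgebra _).mpr (gsym_symm n f)⟩
  map_add' f g := by
    apply Subtype.ext
    show gsym n (f + g) = gsym n f + gsym n g
    apply gsym_unique
    rw [mul_add, ← gsym_spec, ← gsym_spec, asym, asym, asym, ← Finset.sum_add_distrib]
    refine Finset.sum_congr rfl fun σ _ => ?_
    rw [map_add, smul_add]
  map_smul' r f := by
    apply Subtype.ext
    show gsym n (r • f) = (r : Spoly n) * gsym n f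
    apply gsym_unique
    have : asym n (r • f) = (r : Spoly n) * asym n f := by
      rw [asym, asym, Finset.mul_sum]
      refine Finset.sum_congr rfl fun σ _ => ?_
      have hrs : rename ⇑σ (r • f) = (r : Spoly n) * rename ⇑σ f := by
        rw [Algebra.smul_def, map_mul]
        congr 1
        exact r.2 σ
      rw [hrs, mul_smul_comm]
    rw [this, gsym_spec n f]
    ring

lemma zsmul_tmul'' {n : ℕ} {M : Type} [AddCommGroup M]
    [Module (symmetricSubalgebra (Fin n) ℚ) M] (c : ℤ) (x : Spoly n) (m : M) :
    (c • x) ⊗ₜ[symmetricSubalgebra (Fin n) ℚ] m = c • (x ⊗ₜ m) :=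
  map_zsmul ((TensorProduct.mk (symmetricSubalgebra (Fin n) ℚ) (Spoly n) M).flip m) c x

lemma piR_vandermonde (n : ℕ) :
    piR n (vandermonde n) = (Fintype.card (Perm (Fin n)) : symmetricSubalgebra (Fin n) ℚ) := by
  apply Subtype.ext
  show gsym n (vandermonde n) = _
  rw [gsym_unique n (vandermonde n) ((Fintype.card (Perm (Fin n)) : Spoly n))]
  · exact (map_natCast (symmetricSubalgebra (Fin n) ℚ).val _).symm
  · rw [asym]
    have : ∀ σ : Perm (Fin n), (Perm.sign σ : ℤ) • rename ⇑σ (vandermonde n) = vandermonde n := by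
      intro σ
      rw [rename_vandermonde, smul_smul]
      rcases Int.units_eq_one_or (Perm.sign σ) with h | h <;> simp [h]
    rw [Finset.sum_congr rfl (fun σ _ => this σ), Finset.sum_const, Finset.card_univ,
      nsmul_eq_mul, mul_comm]

lemma key (n : ℕ) (M : Type) [AddCommGroup M] [Module (symmetricSubalgebra (Fin n) ℚ) M]
    (z : Spoly n ⊗[symmetricSubalgebra (Fin n) ℚ] M) :
    ∑ σ : Perm (Fin n), (Perm.sign σ : ℤ) • LinearMap.rTensor M (renameLin n σ) z
      = vandermonde n ⊗ₜ (TensorProduct.lid (symmetricSubalgebra (Fin n) ℚ) M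
          (LinearMap.rTensor M (piR n) z)) := by
  induction z using TensorProduct.induction_on with
  | zero => simp
  | tmul f m =>
      rw [LinearMap.rTensor_tmul, TensorProduct.lid_tmul]
      have h1 : ∀ σ : Perm (Fin n),
          (Perm.sign σ : ℤ) • LinearMap.rTensor M (renameLin n σ) (f ⊗ₜ m)
            = ((Perm.sign σ : ℤ) • rename ⇑σ f) ⊗ₜ[symmetricSubalgebra (Fin n) ℚ] m := by
        intro σ
        rw [LinearMap.rTensor_tmul, zsmul_tmul'']
        rfl
      rw [Finset.sum_congr rfl (fun σ _ => h1 σ), ← TensorProduct.sum_tmul]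
      have h2 : (∑ σ : Perm (Fin n), (Perm.sign σ : ℤ) • rename ⇑σ f) = piR n f • vandermonde n := by
        show asym n f = _
        rw [gsym_spec n f]
        rw [Algebra.smul_def]
        show vandermonde n * gsym n f = gsym n f * vandermonde n
        ring
      rw [h2, TensorProduct.smul_tmul]
  | add x y hx hy =>
      simp only [map_add, smul_add, Finset.sum_add_distrib, hx, hy, TensorProduct.tmul_add]


theorem stmt_19 (n : ℕ) :
    (∀ (M : Type) [AddCommGroup M] [Module (symmetricSubalgebra (Fin n) ℚ) M],
      Function.Injective
        (fun m : M => (vandermonde n) ⊗ₜ[symmetricSubalgebra (Fin n) ℚ] m)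
      ∧ Set.range (fun m : M => (vandermonde n) ⊗ₜ[symmetricSubalgebra (Fin n) ℚ] m)
          = {z : MvPolynomial (Fin n) ℚ ⊗[symmetricSubalgebra (Fin n) ℚ] M |
              ∀ σ : Perm (Fin n),
                LinearMap.rTensor M (renameLin n σ) z = (Perm.sign σ : ℤ) • z}
      ∧ ∀ (N : Type) [AddCommGroup N] [Module (symmetricSubalgebra (Fin n) ℚ) N]
          (φ : M →ₗ[symmetricSubalgebra (Fin n) ℚ] N) (m : M),
          LinearMap.lTensor (MvPolynomial (Fin n) ℚ) φ
              ((vandermonde n) ⊗ₜ[symmetricSubalgebra (Fin n) ℚ] m)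
            = (vandermonde n) ⊗ₜ[symmetricSubalgebra (Fin n) ℚ] (φ m))
    ∧ Set.BijOn (fun f => f * vandermonde n)
        {f : MvPolynomial (Fin n) ℚ | f.IsSymmetric}
        {f : MvPolynomial (Fin n) ℚ |
          ∀ σ : Perm (Fin n),
            rename ⇑σ f = ((Perm.sign σ : ℤ) : MvPolynomial (Fin n) ℚ) * f} := by
  set R := symmetricSubalgebra (Fin n) ℚ with hR
  set k := Fintype.card (Perm (Fin n)) with hk
  have hkQ : (k : ℚ) ≠ 0 := Nat.cast_ne_zero.mpr Fintype.card_ne_zero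
  set r₀ : R := ⟨C ((k : ℚ))⁻¹, (mem_symmetricSubalgebra _).mpr (fun σ => rename_C _ _)⟩ with hr₀
  have hr₀k : r₀ * (k : R) = 1 := by
    apply Subtype.ext
    push_cast
    rw [show ((k : Spoly n)) = C ((k : ℚ)) by simp]
    rw [← C_mul, inv_mul_cancel₀ hkQ, C_1]
  constructor
  · intro M _ _
    set L : (Spoly n ⊗[R] M) →ₗ[R] M :=
      (TensorProduct.lid R M).toLinearMap ∘ₗ LinearMap.rTensor M (piR n) with hL
    have hLv : ∀ m : M, L (vandermonde n ⊗ₜ[R] m) = (k : R) • m := by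
      intro m
      rw [hL]
      show TensorProduct.lid R M (LinearMap.rTensor M (piR n) (vandermonde n ⊗ₜ[R] m)) = _
      rw [LinearMap.rTensor_tmul, TensorProduct.lid_tmul, piR_vandermonde, hk]
    have hret : ∀ m : M, r₀ • L (vandermonde n ⊗ₜ[R] m) = m := by
      intro m
      rw [hLv, smul_smul, hr₀k, one_smul]
    refine ⟨?_, ?_, ?_⟩
    · intro a b hab
      have := hret a
      have hab' : vandermonde n ⊗ₜ[R] a = vandermonde n ⊗ₜ[R] b := hab
      rw [hab', hret] at this
      exact this.symm
    · ext z
      simp only [Set.mem_range, Set.mem_setOf_eq]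
      constructor
      · rintro ⟨m, rfl⟩ σ
        rw [LinearMap.rTensor_tmul]
        show (rename ⇑σ (vandermonde n)) ⊗ₜ[R] m = _
        rw [rename_vandermonde, zsmul_tmul'']
      · intro hz
        have hkey := key n M z
        have hsum : ∀ σ : Perm (Fin n),
            (Perm.sign σ : ℤ) • LinearMap.rTensor M (renameLin n σ) z = z := by
          intro σ
          rw [hz σ, smul_smul]
          rcases Int.units_eq_one_or (Perm.sign σ) with h | h <;> simp [h]
        rw [Finset.sum_congr rfl (fun σ _ => hsum σ), Finset.sum_const, Finset.card_univ,
          ← hk] at hkey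
        set w := TensorProduct.lid R M (LinearMap.rTensor M (piR n) z) with hw
        refine ⟨r₀ • w, ?_⟩
        have h1 : (k : R) • z = vandermonde n ⊗ₜ[R] w := by
          rw [Nat.cast_smul_eq_nsmul, hkey]
        calc vandermonde n ⊗ₜ[R] (r₀ • w) = r₀ • (vandermonde n ⊗ₜ[R] w) :=
              (TensorProduct.tmul_smul r₀ _ _)
          _ = r₀ • ((k : R) • z) := by rw [h1]
          _ = z := by rw [smul_smul, hr₀k, one_smul]
    · intro N _ _ φ m
      exact LinearMap.lTensor_tmul _ _ _ _
  · refine ⟨?_, ?_, ?_⟩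
    · intro f hf σ
      simp only [Set.mem_setOf_eq] at hf ⊢
      rw [map_mul, hf σ, rename_vandermonde, zsmul_eq_mul]
      ring
    · intro a ha b hb hab
      simp only [Set.mem_setOf_eq] at hab
      exact mul_right_cancel₀ (vandermonde_ne_zero n) hab
    · intro h hh
      simp only [Set.mem_setOf_eq] at hh
      obtain ⟨g, hg, hgeq⟩ := skew_exists n h (fun σ => by rw [hh σ, zsmul_eq_mul])
      exact ⟨g, hg, by rw [hgeq]; ring⟩

end
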